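/- Let A¹ and A² be unital *-subalgebras of M_m(ℂ) such that all minimal projections of A¹ have equal trace and all minimal projections of A² have equal trace. Then the following are equivalent: (i) for every minimal projection P ∈ A¹ and every minimal projection Q ∈ A², Tr(PQ) = (Tr P)(Tr Q)/m; (ii) the traceless subspaces of A¹ and A² are orthogonal with respect to the Hilbert–Schmidt inner product ⟨A,B⟩ = τ(A*B), where τ = (1/m)Tr. -/
import Mathlib


noncomputable section

/-- `p` is a projection belonging to the subalgebra `A`: `p = p² = p*`. -/
def IsProjectionIn {m : ℕ} (A : StarSubalgebra ℂ (Matrix (Fin m) (Fin m) ℂ))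
    (p : Matrix (Fin m) (Fin m) ℂ) : Prop :=
  p ∈ A ∧ p * p = p ∧ star p = p

/-- `p` is a minimal projection of the subalgebra `A`: it is a nonzero projection in `A`
and the only projections `q ∈ A` with `q ≤ p` (i.e. `p q = q p = q`) are `0` and `p`. -/
def IsMinimalProjectionIn {m : ℕ} (A : StarSubalgebra ℂ (Matrix (Fin m) (Fin m) ℂ))
    (p : Matrix (Fin m) (Fin m) ℂ) : Prop :=
  IsProjectionIn A p ∧ p ≠ 0 ∧
    ∀ q, IsProjectionIn A q → p * q = q → q * p = q → q = 0 ∨ q = p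

open Polynomial Matrix

variable {m : ℕ}

/-- rank zero implies zero matrix -/
lemma rank_zero_imp (p : Matrix (Fin m) (Fin m) ℂ) (h : p.rank = 0) : p = 0 := by
  have h2 : LinearMap.range p.mulVecLin = ⊥ := Submodule.finrank_eq_zero.mp h
  have h3 : p.mulVecLin = 0 := LinearMap.range_eq_bot.mp h2
  ext i j
  have := congrFun (congrArg (fun f => f.toFun) h3) (Pi.single j 1)
  have h4 : p *ᵥ Pi.single j 1 = 0 := this
  have := congrFun h4 i
  simpa [Matrix.mulVec_single] using this

lemma rank_add_le_rank (p q : Matrix (Fin m) (Fin m) ℂ)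
    (hp : p * p = p) (hq : q * q = q) (hpq : p * q = q) (hqp : q * p = q) :
    q.rank + (p - q).rank ≤ p.rank := by
  have hpq2 : p * (p - q) = p - q := by
    rw [Matrix.mul_sub, hp, hpq]
  have hq2 : q * (p - q) = 0 := by
    rw [Matrix.mul_sub, hqp, hq, sub_self]
  have hr1 : LinearMap.range q.mulVecLin ≤ LinearMap.range p.mulVecLin := by
    rw [← hpq, Matrix.mulVecLin_mul]; exact LinearMap.range_comp_le_range _ _
  have hr2 : LinearMap.range (p - q).mulVecLin ≤ LinearMap.range p.mulVecLin := by
    rw [← hpq2, Matrix.mulVecLin_mul]; exact LinearMap.range_comp_le_range _ _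
  have hdisj : Disjoint (LinearMap.range q.mulVecLin) (LinearMap.range (p - q).mulVecLin) := by
    rw [Submodule.disjoint_def]
    rintro v ⟨a, rfl⟩ ⟨b, hb⟩
    have h5 : q *ᵥ (q *ᵥ a) = q *ᵥ a := by
      rw [Matrix.mulVec_mulVec, hq]
    have h6 : q *ᵥ (q *ᵥ a) = 0 := by
      rw [show (q *ᵥ a) = (p - q) *ᵥ b from hb.symm, Matrix.mulVec_mulVec, hq2,
        Matrix.zero_mulVec]
    simpa [h6] using h5.symm
  have := Submodule.finrank_sup_add_finrank_inf_eq
    (LinearMap.range q.mulVecLin) (LinearMap.range (p - q).mulVecLin)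
  rw [hdisj.eq_bot, finrank_bot, add_zero] at this
  calc q.rank + (p - q).rank
      = Module.finrank ℂ ↥(LinearMap.range q.mulVecLin ⊔ LinearMap.range (p - q).mulVecLin) :=
        this.symm
    _ ≤ p.rank := Submodule.finrank_mono (sup_le hr1 hr2)

/-- Conjugation by a unitary as an algebra homomorphism. -/
def conjAlgHom (U : Matrix (Fin m) (Fin m) ℂ) (hU : U ∈ Matrix.unitaryGroup (Fin m) ℂ) :
    Matrix (Fin m) (Fin m) ℂ →ₐ[ℂ] Matrix (Fin m) (Fin m) ℂ where
  toFun X := U * X * star U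
  map_one' := by
    show U * 1 * star U = 1
    rw [mul_one]
    exact (Matrix.mem_unitaryGroup_iff).mp hU
  map_mul' X Y := by
    have h1 : star U * U = 1 := (Matrix.mem_unitaryGroup_iff').mp hU
    calc U * (X * Y) * star U = U * X * (star U * U) * Y * star U := by
          rw [h1]; noncomm_ring
      _ = U * X * star U * (U * Y * star U) := by noncomm_ring
  map_zero' := by simp
  map_add' X Y := by
    show U * (X + Y) * star U = U * X * star U + U * Y * star U
    rw [Matrix.mul_add, Matrix.add_mul]
  commutes' r := by
    have h2 : U * star U = 1 := (Matrix.mem_unitaryGroup_iff).mp hU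
    simp only [Algebra.algebraMap_eq_smul_one]
    rw [Matrix.mul_smul, mul_one, Matrix.smul_mul, h2]

lemma hermitian_mem_span_proj (A : StarSubalgebra ℂ (Matrix (Fin m) (Fin m) ℂ))
    (h : Matrix (Fin m) (Fin m) ℂ) (hmem : h ∈ A) (hsa : star h = h) :
    h ∈ Submodule.span ℂ {r | IsProjectionIn A r} := by
  have hA : h.IsHermitian := hsa
  set U : Matrix (Fin m) (Fin m) ℂ := (hA.eigenvectorUnitary : Matrix (Fin m) (Fin m) ℂ) with hUdef
  have hU : U ∈ Matrix.unitaryGroup (Fin m) ℂ := (hA.eigenvectorUnitary).2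
  set ψ := conjAlgHom U hU with hψdef
  have hspec : h = ψ (Matrix.diagonal (fun i => ((hA.eigenvalues i : ℝ) : ℂ))) := by
    have := hA.spectral_theorem
    exact this
  -- key computation
  have key : ∀ f : ℝ[X], aeval h (f.map (algebraMap ℝ ℂ)) =
      ψ (Matrix.diagonal (fun i => ((f.eval (hA.eigenvalues i) : ℝ) : ℂ))) := by
    intro f
    conv_lhs => rw [hspec]
    rw [aeval_algHom_apply]
    congr 1
    have hdiag : Matrix.diagonal (fun i => ((hA.eigenvalues i : ℝ) : ℂ)) =
        Matrix.diagonalAlgHom (n := Fin m) (α := ℂ) ℂ (fun i => ((hA.eigenvalues i : ℝ) : ℂ)) := rfl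
    rw [hdiag, aeval_algHom_apply]
    show Matrix.diagonal _ = Matrix.diagonal _
    refine congrArg Matrix.diagonal ?_
    funext i
    rw [aeval_fn_apply]
    show aeval ((algebraMap ℝ ℂ) (hA.eigenvalues i)) (f.map (algebraMap ℝ ℂ)) = _
    rw [aeval_def, eval₂_map]
    have hc : (algebraMap ℂ ℂ).comp (algebraMap ℝ ℂ) = algebraMap ℝ ℂ := by
      ext x; simp
    rw [hc, Polynomial.eval₂_at_apply]
    rfl
  classical
  set S : Finset ℝ := Finset.image hA.eigenvalues Finset.univ with hS
  have hinj : Set.InjOn id (S : Set ℝ) := Set.injOn_id _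
  have hmemS : ∀ i, hA.eigenvalues i ∈ S := fun i =>
    Finset.mem_image_of_mem _ (Finset.mem_univ i)
  set χ : ℝ → (Fin m → ℂ) := fun μ i => if hA.eigenvalues i = μ then (1 : ℂ) else 0 with hχ
  set P : ℝ → Matrix (Fin m) (Fin m) ℂ :=
    fun μ => aeval h ((Lagrange.basis S id μ).map (algebraMap ℝ ℂ)) with hP
  have hmem' : h ∈ A.toSubalgebra := hmem
  have hmemP : ∀ g : ℂ[X], aeval h g ∈ A := by
    intro g
    have h1 := Polynomial.aeval_algHom_apply (A.toSubalgebra).val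
      (⟨h, hmem'⟩ : A.toSubalgebra) g
    rw [show (A.toSubalgebra.val ⟨h, hmem'⟩) = h from rfl] at h1
    rw [h1]
    exact (aeval (⟨h, hmem'⟩ : A.toSubalgebra) g).2
  have hev : ∀ μ, μ ∈ S → ∀ i, (Lagrange.basis S id μ).eval (hA.eigenvalues i)
      = if hA.eigenvalues i = μ then 1 else 0 := by
    intro μ hμ i
    by_cases hcase : hA.eigenvalues i = μ
    · rw [if_pos hcase, hcase]
      exact Lagrange.eval_basis_self hinj hμ
    · rw [if_neg hcase]
      simpa using Lagrange.eval_basis_of_ne (s := S) (v := id) (i := μ)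
        (j := hA.eigenvalues i) (Ne.symm hcase) (hmemS i)
  have hPχ : ∀ μ, μ ∈ S → P μ = ψ (Matrix.diagonal (χ μ)) := by
    intro μ hμ
    show aeval h ((Lagrange.basis S id μ).map (algebraMap ℝ ℂ)) = ψ (Matrix.diagonal (χ μ))
    rw [key]
    congr 1
    refine congrArg Matrix.diagonal ?_
    funext i
    rw [hev μ hμ i, hχ]
    simp [apply_ite (fun (x : ℝ) => (x : ℂ))]
  have hstarψ : ∀ X, star (ψ X) = ψ (star X) := by
    intro X
    show star (U * X * star U) = U * star X * star U
    rw [StarMul.star_mul, StarMul.star_mul, star_star]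
    noncomm_ring
  have hProj : ∀ μ, μ ∈ S → IsProjectionIn A (P μ) := by
    intro μ hμ
    refine ⟨hmemP _, ?_, ?_⟩
    · rw [hPχ μ hμ, ← _root_.map_mul, Matrix.diagonal_mul_diagonal]
      congr 1
      refine congrArg Matrix.diagonal ?_
      funext i
      rw [hχ]
      by_cases hcase : hA.eigenvalues i = μ <;> simp [hcase]
    · rw [hPχ μ hμ, hstarψ]
      congr 1
      rw [Matrix.star_eq_conjTranspose, Matrix.diagonal_conjTranspose]
      refine congrArg Matrix.diagonal ?_
      funext i
      rw [hχ]
      simp [Pi.star_def, apply_ite (star : ℂ → ℂ)]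
  have hsum : h = ∑ μ ∈ S, (μ : ℂ) • P μ := by
    have e1 : ∀ μ ∈ S, (μ : ℂ) • P μ = ψ ((μ : ℂ) • Matrix.diagonal (χ μ)) := by
      intro μ hμ
      rw [hPχ μ hμ, _root_.map_smul]
    rw [Finset.sum_congr rfl e1, ← map_sum]
    have e2 : (∑ μ ∈ S, (μ : ℂ) • Matrix.diagonal (χ μ))
        = Matrix.diagonal (fun i => ((hA.eigenvalues i : ℝ) : ℂ)) := by
      have e3 : ∀ μ ∈ S, (μ : ℂ) • Matrix.diagonal (χ μ)
          = Matrix.diagonal (fun i => (μ : ℂ) • χ μ i) := by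
        intro μ _
        rw [← Matrix.diagonal_smul]
        rfl
      rw [Finset.sum_congr rfl e3]
      ext i j
      by_cases hij : i = j
      · subst hij
        simp only [Matrix.sum_apply, Matrix.diagonal_apply_eq]
        rw [hχ]
        simp only [smul_eq_mul, mul_ite, mul_one, mul_zero]
        rw [Finset.sum_ite_eq S (hA.eigenvalues i) (fun μ => (μ : ℂ))]
        simp [hmemS i]
      · simp [Matrix.sum_apply, Matrix.diagonal_apply_ne _ hij]
    rw [e2, ← hspec]
  rw [hsum]
  refine Submodule.sum_mem _ (fun μ hμ => Submodule.smul_mem _ _ ?_)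
  exact Submodule.subset_span (hProj μ hμ)

lemma proj_mem_span_min (A : StarSubalgebra ℂ (Matrix (Fin m) (Fin m) ℂ)) :
    ∀ (n : ℕ) (p : Matrix (Fin m) (Fin m) ℂ), p.rank ≤ n → IsProjectionIn A p →
      p ∈ Submodule.span ℂ {r | IsMinimalProjectionIn A r} := by
  intro n
  induction n with
  | zero =>
    intro p hrank hp
    rw [rank_zero_imp p (Nat.le_zero.mp hrank)]
    exact Submodule.zero_mem _
  | succ n ih =>
    intro p hrank hp
    by_cases hzero : p = 0
    · rw [hzero]; exact Submodule.zero_mem _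
    by_cases hmin : IsMinimalProjectionIn A p
    · exact Submodule.subset_span hmin
    · have hnot : ¬ ∀ q, IsProjectionIn A q → p * q = q → q * p = q → q = 0 ∨ q = p := by
        intro hc; exact hmin ⟨hp, hzero, hc⟩
      push_neg at hnot
      obtain ⟨q, hq, hpq, hqp, hq0, hqne⟩ := hnot
      have hqrank : 1 ≤ q.rank := by
        by_contra hcon
        push_neg at hcon
        exact hq0 (rank_zero_imp q (Nat.lt_one_iff.mp hcon))
      have hsubrank : 1 ≤ (p - q).rank := by
        by_contra hcon
        push_neg at hcon
        have h5 := rank_zero_imp _ (Nat.lt_one_iff.mp hcon)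
        rw [sub_eq_zero] at h5
        exact hqne h5.symm
      have hadd := rank_add_le_rank p q hp.2.1 hq.2.1 hpq hqp
      have hq' : IsProjectionIn A (p - q) := by
        refine ⟨sub_mem hp.1 hq.1, ?_, ?_⟩
        · have e : (p - q) * (p - q) = p * p - p * q - (q * p - q * q) := by noncomm_ring
          rw [e, hp.2.1, hq.2.1, hpq, hqp, sub_self, sub_zero]
        · rw [star_sub, hp.2.2, hq.2.2]
      have hmem1 := ih q (by omega) hq
      have hmem2 := ih (p - q) (by omega) hq'
      have : p = q + (p - q) := by abel
      rw [this]
      exact Submodule.add_mem _ hmem1 hmem2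

lemma mem_span_min (A : StarSubalgebra ℂ (Matrix (Fin m) (Fin m) ℂ))
    (x : Matrix (Fin m) (Fin m) ℂ) (hx : x ∈ A) :
    x ∈ Submodule.span ℂ {r | IsMinimalProjectionIn A r} := by
  have hspan : Submodule.span ℂ {r | IsProjectionIn A r}
      ≤ Submodule.span ℂ {r | IsMinimalProjectionIn A r} := by
    rw [Submodule.span_le]
    intro p hp
    exact proj_mem_span_min A p.rank p le_rfl hp
  have herm : ∀ y, y ∈ A → star y = y →
      y ∈ Submodule.span ℂ {r | IsMinimalProjectionIn A r} :=
    fun y hy hsy => hspan (hermitian_mem_span_proj A y hy hsy)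
  set a := (2⁻¹ : ℂ) • (x + star x) with ha
  set b := (-(Complex.I/2)) • (x - star x) with hb
  have hstx : star x ∈ A := star_mem hx
  have haA : a ∈ A := by
    rw [ha]
    exact A.toSubalgebra.smul_mem (add_mem hx hstx) _
  have hbA : b ∈ A := by
    rw [hb]
    exact A.toSubalgebra.smul_mem (sub_mem hx hstx) _
  have hastar : star a = a := by
    rw [ha, star_smul, star_add, star_star]
    simp [add_comm]
  have hbstar : star b = b := by
    rw [hb, star_smul, star_sub, star_star]
    have h1 : star (-(Complex.I / 2)) = Complex.I / 2 := by
      simp only [star_neg, star_div₀, Complex.star_def, Complex.conj_I, map_ofNat]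
      ring
    rw [h1, neg_smul, ← smul_neg, neg_sub]
  have hx_eq : x = a + Complex.I • b := by
    rw [ha, hb, smul_smul]
    have e : Complex.I * -(Complex.I / 2) = 2⁻¹ := by
      have h2 := Complex.I_mul_I
      linear_combination -h2 / 2
    rw [e]
    rw [← smul_add]
    rw [show x + star x + (x - star x) = x + x by abel]
    rw [smul_add]
    rw [← add_smul]
    norm_num
  rw [hx_eq]
  exact Submodule.add_mem _ (herm a haA hastar)
    (Submodule.smul_mem _ _ (herm b hbA hbstar))


/-- Let `A¹, A²` be unital *-subalgebras of `M_m(ℂ)` in which all minimal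
projections have equal trace.  Then the following are equivalent:
(i) `Tr(PQ) = (Tr P)(Tr Q)/m` for all minimal projections `P ∈ A¹`, `Q ∈ A²`;
(ii) the traceless subspaces of `A¹` and `A²` are orthogonal for the Hilbert–Schmidt
inner product `⟨A, B⟩ = τ(A* B)`, `τ = (1/m) Tr`. -/
theorem minimal_projection_trace_iff_traceless_orthogonal {m : ℕ}
    (A₁ A₂ : StarSubalgebra ℂ (Matrix (Fin m) (Fin m) ℂ))
    (h₁ : ∀ p q, IsMinimalProjectionIn A₁ p → IsMinimalProjectionIn A₁ q →
      p.trace = q.trace)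
    (h₂ : ∀ p q, IsMinimalProjectionIn A₂ p → IsMinimalProjectionIn A₂ q →
      p.trace = q.trace) :
    (∀ p q, IsMinimalProjectionIn A₁ p → IsMinimalProjectionIn A₂ q →
        (p * q).trace = p.trace * q.trace / (m : ℂ))
      ↔
    (∀ x ∈ A₁, ∀ y ∈ A₂, x.trace / (m : ℂ) = 0 → y.trace / (m : ℂ) = 0 →
        (star x * y).trace / (m : ℂ) = 0) := by
  rcases Nat.eq_zero_or_pos m with hm | hm
  · subst hm
    have htr : ∀ M : Matrix (Fin 0) (Fin 0) ℂ, M.trace = 0 := by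
      intro M
      simp [Matrix.trace]
    constructor
    · intro _ x _ y _ _ _
      rw [htr]
      simp
    · intro _ p q _ _
      rw [htr, htr, htr]
      simp
  have hmne : (m : ℂ) ≠ 0 := Nat.cast_ne_zero.mpr hm.ne'
  constructor
  · -- (i) → (ii)
    intro hi x hx y hy hxt hyt
    have hyt' : y.trace = 0 := by
      rwa [_root_.div_eq_zero_iff, or_iff_left hmne] at hyt
    -- bilinear extension
    have inner : ∀ p, IsMinimalProjectionIn A₁ p →
        ∀ b, b ∈ Submodule.span ℂ {r | IsMinimalProjectionIn A₂ r} →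
        (m : ℂ) * (p * b).trace = p.trace * b.trace := by
      intro p hp b hb
      induction hb using Submodule.span_induction with
      | mem r hr =>
        rw [hi p r hp hr]
        field_simp
      | zero => simp
      | add u v hu hv ihu ihv =>
        rw [Matrix.mul_add, Matrix.trace_add, Matrix.trace_add, mul_add, mul_add, ihu, ihv]
      | smul c u hu ihu =>
        rw [Matrix.mul_smul, Matrix.trace_smul, Matrix.trace_smul, smul_eq_mul, smul_eq_mul,
          mul_left_comm, ihu]
        ring
    have claim : ∀ a, a ∈ Submodule.span ℂ {r | IsMinimalProjectionIn A₁ r} →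
        ∀ b, b ∈ Submodule.span ℂ {r | IsMinimalProjectionIn A₂ r} →
        (m : ℂ) * (a * b).trace = a.trace * b.trace := by
      intro a ha b hb
      induction ha using Submodule.span_induction with
      | mem r hr => exact inner r hr b hb
      | zero => simp
      | add u v hu hv ihu ihv =>
        rw [Matrix.add_mul, Matrix.trace_add, Matrix.trace_add, mul_add, add_mul, ihu, ihv]
      | smul c u hu ihu =>
        rw [Matrix.smul_mul, Matrix.trace_smul, Matrix.trace_smul, smul_eq_mul, smul_eq_mul,
          mul_left_comm, ihu]
        ring
    have hkey := claim (star x) (mem_span_min A₁ (star x) (star_mem hx))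
      y (mem_span_min A₂ y hy)
    rw [hyt', mul_zero] at hkey
    have : (star x * y).trace = 0 := by
      rcases mul_eq_zero.mp hkey with h | h
      · exact absurd h hmne
      · exact h
    rw [this, zero_div]
  · -- (ii) → (i)
    intro hii p q hp hq
    set c := p.trace / (m : ℂ) with hc
    set d := q.trace / (m : ℂ) with hd
    set x := p - c • (1 : Matrix (Fin m) (Fin m) ℂ) with hxdef
    set y := q - d • (1 : Matrix (Fin m) (Fin m) ℂ) with hydef
    have h1A : (1 : Matrix (Fin m) (Fin m) ℂ) ∈ A₁ := one_mem A₁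
    have h1B : (1 : Matrix (Fin m) (Fin m) ℂ) ∈ A₂ := one_mem A₂
    have hxA : x ∈ A₁ := sub_mem hp.1.1 (A₁.toSubalgebra.smul_mem h1A c)
    have hyA : y ∈ A₂ := sub_mem hq.1.1 (A₂.toSubalgebra.smul_mem h1B d)
    have htr1 : (1 : Matrix (Fin m) (Fin m) ℂ).trace = (m : ℂ) := by
      rw [Matrix.trace_one]
      simp
    have hxt : x.trace = 0 := by
      rw [hxdef, Matrix.trace_sub, Matrix.trace_smul, htr1, smul_eq_mul, hc,
        div_mul_cancel₀ _ hmne, sub_self]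
    have hyt : y.trace = 0 := by
      rw [hydef, Matrix.trace_sub, Matrix.trace_smul, htr1, smul_eq_mul, hd,
        div_mul_cancel₀ _ hmne, sub_self]
    have h0 := hii x hxA y hyA (by rw [hxt, zero_div]) (by rw [hyt, zero_div])
    rw [_root_.div_eq_zero_iff, or_iff_left hmne] at h0
    -- expand
    have hstarx : star x = p - (starRingEnd ℂ c) • (1 : Matrix (Fin m) (Fin m) ℂ) := by
      rw [hxdef, star_sub, hp.1.2.2, star_smul, star_one]
      rfl
    have hexp : (star x * y).trace = (p * q).trace - d * p.trace
        - (starRingEnd ℂ c) * q.trace + (starRingEnd ℂ c) * d * (m : ℂ) := by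
      rw [hstarx, hydef]
      simp only [Matrix.sub_mul, Matrix.mul_sub, Matrix.smul_mul, Matrix.mul_smul, one_mul,
        mul_one, smul_smul, Matrix.trace_sub, Matrix.trace_smul, smul_eq_mul, htr1]
      ring
    rw [hexp] at h0
    have hqd : q.trace = d * (m : ℂ) := by
      rw [hd, div_mul_cancel₀ _ hmne]
    have hfin : (p * q).trace = d * p.trace := by
      linear_combination h0 + (starRingEnd ℂ c) * hqd
    rw [hfin, hd]
    ring
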